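/- For every nonnegative integer n, Σ_{k=0}^n k H_{n−k} = (n(n+1)/2) H_{n+1} − (3/4) n(n+1). -/

import Mathlib

/-- Generalized harmonic number `H n m = ∑_{k=1}^n 1/k^m` (order `m : ℤ`), as a rational. -/
def H (n : ℕ) (m : ℤ) : ℚ := ∑ k ∈ Finset.range n, ((k : ℚ) + 1) ^ (-m)

lemma H_succ (n : ℕ) : H (n + 1) 1 = H n 1 + 1 / ((n : ℚ) + 1) := by
  simp [H, Finset.sum_range_succ, zpow_neg]

theorem sum_k_harmonic_rev (n : ℕ) :
    ∑ k ∈ Finset.range (n + 1), (k : ℚ) * H (n - k) 1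
      = ((n : ℚ) * ((n : ℚ) + 1) / 2) * H (n + 1) 1 - (3 / 4) * (n : ℚ) * ((n : ℚ) + 1) := by
  induction n with
  | zero => simp [H]
  | succ n ih =>
    have key : ∑ k ∈ Finset.range (n + 1), (k : ℚ) / ((n - k : ℕ) + 1)
        = ((n : ℚ) + 1) * H (n + 1) 1 - ((n : ℚ) + 1) := by
      rw [← Finset.sum_range_reflect]
      have : ∀ j ∈ Finset.range (n + 1),
          ((n - j : ℕ) : ℚ) / ((n - (n - j) : ℕ) + 1)
            = ((n : ℚ) + 1) * (1 / ((j : ℚ) + 1)) - 1 := by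
        intro j hj
        rw [Finset.mem_range] at hj
        have hj' : j ≤ n := Nat.lt_succ_iff.mp hj
        rw [Nat.sub_sub_self hj', Nat.cast_sub hj']
        have : ((j : ℚ) + 1) ≠ 0 := by positivity
        field_simp
        ring
      rw [Nat.add_sub_cancel, Finset.sum_congr rfl this, Finset.sum_sub_distrib, ← Finset.mul_sum]
      simp [H, zpow_neg]
    have split : ∑ k ∈ Finset.range (n + 1 + 1), (k : ℚ) * H (n + 1 - k) 1
        = (∑ k ∈ Finset.range (n + 1), (k : ℚ) * H (n - k) 1)
          + ∑ k ∈ Finset.range (n + 1), (k : ℚ) / ((n - k : ℕ) + 1) := by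
      rw [Finset.sum_range_succ]
      have h0 : H (n + 1 - (n + 1)) 1 = 0 := by simp [H]
      rw [h0, mul_zero, add_zero]
      rw [← Finset.sum_add_distrib]
      apply Finset.sum_congr rfl
      intro k hk
      rw [Finset.mem_range] at hk
      have : n + 1 - k = (n - k) + 1 := by omega
      rw [this, H_succ]
      ring
    rw [split, ih, key, H_succ (n + 1)]
    push_cast
    have h1 : ((n : ℚ) + 1 + 1) ≠ 0 := by positivity
    field_simp
    ring
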